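/- (Straight-edge consistency of the new space.) Let k ≥ 1, a < b, and let γ : [a, b] → ℝ² be affine, γ(t) = p₀ + t·d with d ∈ ℝ², d ≠ 0. Then R + B equals the space of all ℝ²-valued polynomial functions on [a, b] of degree at most k; i.e., in the straight-edge case the curved edge space recovers the standard polynomial space 𝒫_k(e)². -/

import Mathlib

/-- The matrix field `𝔸(x)` anchored at `ν`. -/
def matA (ν x : Fin 2 → ℝ) : Matrix (Fin 2) (Fin 2) ℝ :=
  !![x 0 - ν 0, -(x 1 - ν 1); x 1 - ν 1, x 0 - ν 0]

/-- `R`: the space of functions `t ↦ a₀ + 𝔸(γ(t))b₀` with `a₀, b₀ ∈ ℝ²`, where `𝔸` is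
anchored at `ν̄ = γ(a)`. -/
def Rspace (γ : ℝ → Fin 2 → ℝ) (a : ℝ) : Submodule ℝ (ℝ → Fin 2 → ℝ) where
  carrier := {f | ∃ a₀ b₀ : Fin 2 → ℝ, ∀ t : ℝ, f t = a₀ + (matA (γ a) (γ t)).mulVec b₀}
  add_mem' := by
    rintro f g ⟨a₀, b₀, hf⟩ ⟨a₁, b₁, hg⟩
    exact ⟨a₀ + a₁, b₀ + b₁, fun t => by
      simp only [Pi.add_apply, hf t, hg t, Matrix.mulVec_add]; abel⟩
  zero_mem' := ⟨0, 0, fun t => by simp⟩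
  smul_mem' := by
    rintro r f ⟨a₀, b₀, hf⟩
    exact ⟨r • a₀, r • b₀, fun t => by
      simp only [Pi.smul_apply, hf t, Matrix.mulVec_smul, smul_add]⟩

/-- `B`: the space of `ℝ²`-valued polynomial functions of degree at most `k` vanishing at
`a` and `b`. -/
def Bspace (k : ℕ) (a b : ℝ) : Submodule ℝ (ℝ → Fin 2 → ℝ) where
  carrier := {f | (∃ p : Fin 2 → Polynomial ℝ, (∀ i, (p i).natDegree ≤ k) ∧
      ∀ t : ℝ, ∀ i, f t i = (p i).eval t) ∧ f a = 0 ∧ f b = 0}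
  add_mem' := by
    rintro f g ⟨⟨p, hpd, hpe⟩, hfa, hfb⟩ ⟨⟨q, hqd, hqe⟩, hga, hgb⟩
    refine ⟨⟨fun i => p i + q i, fun i => ?_, fun t i => ?_⟩, ?_, ?_⟩
    · exact le_trans (Polynomial.natDegree_add_le _ _) (max_le (hpd i) (hqd i))
    · simp [hpe t i, hqe t i]
    · simp [Pi.add_apply, hfa, hga]
    · simp [Pi.add_apply, hfb, hgb]
  zero_mem' := ⟨⟨fun _ => 0, fun i => by simp, fun t i => by simp⟩, rfl, rfl⟩
  smul_mem' := by
    rintro r f ⟨⟨p, hpd, hpe⟩, hfa, hfb⟩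
    refine ⟨⟨fun i => r • p i, fun i => ?_, fun t i => ?_⟩, ?_, ?_⟩
    · exact le_trans (Polynomial.natDegree_smul_le _ _) (hpd i)
    · simp [hpe t i]
    · simp [Pi.smul_apply, hfa]
    · simp [Pi.smul_apply, hfb]

/-- `𝒫_k(e)²`: the space of `ℝ²`-valued polynomial functions of degree at most `k`. -/
def Pspace (k : ℕ) : Submodule ℝ (ℝ → Fin 2 → ℝ) where
  carrier := {f | ∃ p : Fin 2 → Polynomial ℝ, (∀ i, (p i).natDegree ≤ k) ∧
      ∀ t : ℝ, ∀ i, f t i = (p i).eval t}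
  add_mem' := by
    rintro f g ⟨p, hpd, hpe⟩ ⟨q, hqd, hqe⟩
    exact ⟨fun i => p i + q i,
      fun i => le_trans (Polynomial.natDegree_add_le _ _) (max_le (hpd i) (hqd i)),
      fun t i => by simp [hpe t i, hqe t i]⟩
  zero_mem' := ⟨fun _ => 0, fun i => by simp, fun t i => by simp⟩
  smul_mem' := by
    rintro r f ⟨p, hpd, hpe⟩
    exact ⟨fun i => r • p i,
      fun i => le_trans (Polynomial.natDegree_smul_le _ _) (hpd i),
      fun t i => by simp [hpe t i]⟩


/-- Key computation: for an affine curve, the matrix action is `(t-a)`-scaled. -/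
lemma matA_affine_mulVec (p₀ d b₀ : Fin 2 → ℝ) (a t : ℝ) :
    (matA (p₀ + a • d) (p₀ + t • d)).mulVec b₀ =
      (t - a) • ![d 0 * b₀ 0 - d 1 * b₀ 1, d 1 * b₀ 0 + d 0 * b₀ 1] := by
  funext i
  fin_cases i <;>
    simp [matA, Matrix.mulVec, dotProduct, Fin.sum_univ_two, Matrix.vecHead, Matrix.vecTail] <;> ring

/-- Affine functions of degree ≤ 1 ≤ k are in `Pspace k`. -/
lemma affine_mem_Pspace (k : ℕ) (hk : 1 ≤ k) (c v : Fin 2 → ℝ) :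
    (fun t : ℝ => c + t • v) ∈ Pspace k := by
  refine ⟨fun i => Polynomial.C (c i) + Polynomial.C (v i) * Polynomial.X,
    fun i => ?_, fun t i => by simp; ring⟩
  refine le_trans (Polynomial.natDegree_add_le _ _) (max_le (by simp) ?_)
  refine le_trans (Polynomial.natDegree_mul_le) ?_
  simp [hk]

/-- Straight-edge consistency of the new space: if `γ(t) = p₀ + t·d` is affine with `d ≠ 0`,
then `R + B` equals the space of all `ℝ²`-valued polynomial functions of degree at most `k`,
i.e. the curved edge space recovers the standard polynomial space `𝒫_k(e)²`. -/
theorem straight_edge_consistency (k : ℕ) (hk : 1 ≤ k) (a b : ℝ) (hab : a < b)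
    (p₀ d : Fin 2 → ℝ) (hd : d ≠ 0) :
    Rspace (fun s : ℝ => p₀ + s • d) a ⊔ Bspace k a b = Pspace k := by
  have hba : b - a ≠ 0 := sub_ne_zero.mpr hab.ne'
  have hs : d 0 ^ 2 + d 1 ^ 2 ≠ 0 := by
    intro h
    have h0 : d 0 ^ 2 = 0 ∧ d 1 ^ 2 = 0 :=
      (add_eq_zero_iff_of_nonneg (sq_nonneg _) (sq_nonneg _)).mp h
    exact hd (funext fun i => by
      fin_cases i
      · exact pow_eq_zero_iff two_ne_zero |>.mp h0.1
      · exact pow_eq_zero_iff two_ne_zero |>.mp h0.2)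
  apply le_antisymm
  · apply sup_le
    · rintro f ⟨a₀, b₀, hf⟩
      have hf' : ∀ t, f t = (a₀ - a • ![d 0 * b₀ 0 - d 1 * b₀ 1, d 1 * b₀ 0 + d 0 * b₀ 1])
          + t • ![d 0 * b₀ 0 - d 1 * b₀ 1, d 1 * b₀ 0 + d 0 * b₀ 1] := by
        intro t
        rw [hf t, matA_affine_mulVec, sub_smul]
        abel
      have := affine_mem_Pspace k hk
        (a₀ - a • ![d 0 * b₀ 0 - d 1 * b₀ 1, d 1 * b₀ 0 + d 0 * b₀ 1])
        ![d 0 * b₀ 0 - d 1 * b₀ 1, d 1 * b₀ 0 + d 0 * b₀ 1]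
      have hfe : f = fun t : ℝ =>
          (a₀ - a • ![d 0 * b₀ 0 - d 1 * b₀ 1, d 1 * b₀ 0 + d 0 * b₀ 1])
          + t • ![d 0 * b₀ 0 - d 1 * b₀ 1, d 1 * b₀ 0 + d 0 * b₀ 1] := funext hf'
      rw [hfe]; exact this
    · rintro f ⟨h, _, _⟩; exact h
  · rintro f ⟨p, hpd, hpe⟩
    set v : Fin 2 → ℝ := fun i => (f b i - f a i) / (b - a) with hv
    set L : ℝ → Fin 2 → ℝ := fun t => f a + (t - a) • v with hL
    set b₀ : Fin 2 → ℝ := ![(d 0 * v 0 + d 1 * v 1) / (d 0 ^ 2 + d 1 ^ 2),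
        (-(d 1) * v 0 + d 0 * v 1) / (d 0 ^ 2 + d 1 ^ 2)] with hb₀
    have hw : ![d 0 * b₀ 0 - d 1 * b₀ 1, d 1 * b₀ 0 + d 0 * b₀ 1] = v := by
      funext i
      fin_cases i <;>
      · simp only [hb₀, Fin.zero_eta, Fin.mk_one, Matrix.cons_val_zero, Matrix.cons_val_one, Matrix.head_cons,
          Fin.isValue]
        field_simp
        ring
    have hLR : L ∈ Rspace (fun s : ℝ => p₀ + s • d) a := by
      exact ⟨f a, b₀, fun t => by rw [matA_affine_mulVec, hw]⟩
    have hLB : f - L ∈ Bspace k a b := by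
      refine ⟨⟨fun i => p i - (Polynomial.C (f a i - a * v i)
          + Polynomial.C (v i) * Polynomial.X), fun i => ?_, fun t i => ?_⟩, ?_, ?_⟩
      · refine le_trans (Polynomial.natDegree_sub_le _ _) (max_le (hpd i) ?_)
        refine le_trans (Polynomial.natDegree_add_le _ _)
          (max_le ((Polynomial.natDegree_C _).trans_le (Nat.zero_le k)) ?_)
        exact le_trans (Polynomial.natDegree_mul_le) (by simp [hk])
      · simp only [Pi.sub_apply, hL, hv, Pi.add_apply, Pi.smul_apply, smul_eq_mul,
          Polynomial.eval_sub, Polynomial.eval_add, Polynomial.eval_mul,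
          Polynomial.eval_C, Polynomial.eval_X, hpe t i]
        ring
      · funext i; simp [hL]
      · funext i
        simp only [Pi.sub_apply, hL, hv, Pi.add_apply, Pi.smul_apply, smul_eq_mul,
          Pi.zero_apply]
        field_simp
        ring
    have : f = L + (f - L) := by abel
    rw [this]
    exact Submodule.add_mem _ (Submodule.mem_sup_left hLR) (Submodule.mem_sup_right hLB)
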